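/- Define g : ℝ × (0,∞) → ℝ by g(x,t) = (x² + t²)/(2t) if |x| ≤ t and g(x,t) = |x| if |x| ≥ t. Let u₀ : ℝ → ℝ be 1-Lipschitz and set u(x,t) := inf_{y ∈ ℝ} ( u₀(y) + g(x − y, t) ). Then the formula has the semigroup property: for all s, t > 0 and all x ∈ ℝ, u(x, s + t) = inf_{y ∈ ℝ} ( u(y, s) + g(x − y, t) ). In particular, taking u₀(x) = |x|, one has g(x, s + t) = inf_{y ∈ ℝ} ( g(y, s) + g(x − y, t) ). -/

import Mathlib

open Real Set

/-- Rost's hydrodynamic limit profile for TASEP with step initial condition: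
`g(x,t) = (x²+t²)/(2t)` if `|x| ≤ t` and `g(x,t) = |x|` if `|x| ≥ t`. -/
noncomputable def rost (x t : ℝ) : ℝ := if |x| ≤ t then (x ^ 2 + t ^ 2) / (2 * t) else |x|


lemma rost_ge_abs (x t : ℝ) (ht : 0 < t) : |x| ≤ rost x t := by
  rw [rost]
  split_ifs with h
  · rw [le_div_iff₀ (by positivity)]
    nlinarith [sq_nonneg (|x| - t), sq_abs x]
  · exact le_rfl

lemma rost_ge_affine (q x t : ℝ) (hq : |q| ≤ 1) (ht : 0 < t) :
    q * x + t * (1 - q ^ 2) / 2 ≤ rost x t := by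
  rw [rost]
  split_ifs with h
  · rw [← sub_nonneg]
    have : (x ^ 2 + t ^ 2) / (2 * t) - (q * x + t * (1 - q ^ 2) / 2)
        = (x - t * q) ^ 2 / (2 * t) := by field_simp; ring
    rw [this]; positivity
  · push_neg at h
    have h1 : q * x ≤ |q| * |x| := le_trans (le_abs_self _) (by rw [abs_mul])
    have h2 : 0 ≤ 1 - |q| := by linarith
    have h3 : t ≤ |x| := h.le
    have hq2 : q ^ 2 = |q| ^ 2 := (sq_abs q).symm
    nlinarith [mul_nonneg h2 (sub_nonneg.2 h3), mul_nonneg ht.le (sq_nonneg (1 - |q|))]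

lemma rost_le_add (s t x y : ℝ) (hs : 0 < s) (ht : 0 < t) :
    rost x (s + t) ≤ rost y s + rost (x - y) t := by
  by_cases hx : |x| ≤ s + t
  · set q := x / (s + t) with hqdef
    have hst : (0:ℝ) < s + t := by linarith
    have hq : |q| ≤ 1 := by
      rw [hqdef, abs_div, abs_of_pos hst, div_le_one hst]; exact hx
    have e : rost x (s + t) = q * x + (s + t) * (1 - q ^ 2) / 2 := by
      rw [rost, if_pos hx, hqdef]; field_simp; ring
    have l1 := rost_ge_affine q y s hq hs
    have l2 := rost_ge_affine q (x - y) t hq ht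
    have : q * (x - y) = q * x - q * y := by ring
    linarith [l1, l2]
  · push_neg at hx
    rw [rost, if_neg (not_le.2 hx)]
    rcases le_or_gt 0 x with h | h
    · have l1 := rost_ge_affine 1 y s (by norm_num) hs
      have l2 := rost_ge_affine 1 (x - y) t (by norm_num) ht
      rw [abs_of_nonneg h]
      nlinarith [l1, l2]
    · have l1 := rost_ge_affine (-1) y s (by norm_num) hs
      have l2 := rost_ge_affine (-1) (x - y) t (by norm_num) ht
      rw [abs_of_neg h]
      nlinarith [l1, l2]

lemma rost_exists (s t x : ℝ) (hs : 0 < s) (ht : 0 < t) :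
    ∃ y : ℝ, rost y s + rost (x - y) t = rost x (s + t) := by
  have hst : (0:ℝ) < s + t := by linarith
  by_cases hx : |x| ≤ s + t
  · refine ⟨x * s / (s + t), ?_⟩
    have hy : |x * s / (s + t)| ≤ s := by
      rw [abs_div, abs_mul, abs_of_pos hst, abs_of_pos hs, div_le_iff₀ hst]
      nlinarith [abs_nonneg x]
    have hxy : x - x * s / (s + t) = x * t / (s + t) := by field_simp; ring
    have hy2 : |x - x * s / (s + t)| ≤ t := by
      rw [hxy, abs_div, abs_mul, abs_of_pos hst, abs_of_pos ht, div_le_iff₀ hst]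
      nlinarith [abs_nonneg x]
    rw [rost, if_pos hy, rost, if_pos hy2, rost, if_pos hx, hxy]
    field_simp
  · push_neg at hx
    rcases le_or_gt 0 x with h | h
    · refine ⟨s, ?_⟩
      have hxpos : s + t < x := by rwa [abs_of_nonneg h] at hx
      have h1 : |s| ≤ s := by rw [abs_of_pos hs]
      have h2 : ¬ |x - s| ≤ t := by
        rw [abs_of_pos (by linarith)]; push_neg; linarith
      rw [rost, if_pos h1, rost, if_neg h2, rost, if_neg (not_le.2 hx),
        abs_of_nonneg h, abs_of_pos (show (0:ℝ) < x - s by linarith)]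
      field_simp
      ring
    · refine ⟨-s, ?_⟩
      have hxneg : x < -(s + t) := by
        rw [abs_of_neg h] at hx; linarith
      have h1 : |(-s)| ≤ s := by rw [abs_neg, abs_of_pos hs]
      have h2 : ¬ |x - -s| ≤ t := by
        rw [abs_of_neg (show x - -s < 0 by linarith)]; push_neg; linarith
      rw [rost, if_pos h1, rost, if_neg h2, rost, if_neg (not_le.2 hx),
        abs_of_neg h, abs_of_neg (show x - -s < 0 by linarith)]
      field_simp
      ring

lemma rost_add (s t x : ℝ) (hs : 0 < s) (ht : 0 < t) :
    rost x (s + t) = ⨅ y : ℝ, (rost y s + rost (x - y) t) := by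
  have hbdd : BddBelow (range fun y => rost y s + rost (x - y) t) := by
    refine ⟨rost x (s + t), ?_⟩
    rintro a ⟨y, rfl⟩
    exact rost_le_add s t x y hs ht
  refine le_antisymm (le_ciInf fun y => rost_le_add s t x y hs ht) ?_
  obtain ⟨y, hy⟩ := rost_exists s t x hs ht
  exact hy ▸ ciInf_le hbdd y
/-- the inf-convolution formula `u(x,t) = inf_y ( u₀(y) + g(x−y,t) )` has the
semigroup property `u(x, s+t) = inf_y ( u(y,s) + g(x−y,t) )`; in particular, for
`u₀ = |·|`, `g(x, s+t) = inf_y ( g(y,s) + g(x−y,t) )`. -/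
theorem rost_infconv_semigroup (u₀ : ℝ → ℝ) (hu₀ : LipschitzWith 1 u₀)
    (s t : ℝ) (hs : 0 < s) (ht : 0 < t) :
    (∀ x : ℝ,
      (⨅ y : ℝ, (u₀ y + rost (x - y) (s + t)))
        = ⨅ y : ℝ, ((⨅ z : ℝ, (u₀ z + rost (y - z) s)) + rost (x - y) t)) ∧
    ∀ x : ℝ, rost x (s + t) = ⨅ y : ℝ, (rost y s + rost (x - y) t) := by
  have hlip : ∀ a b : ℝ, u₀ a - u₀ b ≤ |a - b| := by
    intro a b
    have := hu₀.dist_le_mul a b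
    rw [Real.dist_eq, Real.dist_eq] at this
    simp only [NNReal.coe_one, one_mul] at this
    exact le_trans (le_abs_self _) this
  -- lower bound for the integrands
  have lb : ∀ (τ : ℝ), 0 < τ → ∀ x y : ℝ, u₀ x ≤ u₀ y + rost (x - y) τ := by
    intro τ hτ x y
    have h1 := hlip x y
    have h2 := rost_ge_abs (x - y) τ hτ
    linarith
  -- bounded below for inner infima
  have hbddin : ∀ (τ : ℝ), 0 < τ → ∀ x : ℝ,
      BddBelow (range fun y => u₀ y + rost (x - y) τ) := by
    intro τ hτ x
    exact ⟨u₀ x, by rintro a ⟨y, rfl⟩; exact lb τ hτ x y⟩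
  have hinner_ge : ∀ (τ : ℝ), 0 < τ → ∀ x : ℝ,
      u₀ x ≤ ⨅ y : ℝ, (u₀ y + rost (x - y) τ) :=
    fun τ hτ x => le_ciInf fun y => lb τ hτ x y
  have hst : (0:ℝ) < s + t := by linarith
  constructor
  · intro x
    have hbddB : BddBelow (range fun y => (⨅ z : ℝ, (u₀ z + rost (y - z) s)) + rost (x - y) t) := by
      refine ⟨u₀ x, ?_⟩
      rintro a ⟨y, rfl⟩
      dsimp only
      have h1 := hinner_ge s hs y
      have h2 := lb t ht x y
      linarith
    refine le_antisymm ?_ ?_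
    · -- A ≤ B
      refine le_ciInf fun y => ?_
      rw [← sub_le_iff_le_add]
      refine le_ciInf fun z => ?_
      rw [sub_le_iff_le_add]
      have h1 : (⨅ w : ℝ, (u₀ w + rost (x - w) (s + t))) ≤ u₀ z + rost (x - z) (s + t) :=
        ciInf_le (hbddin (s + t) hst x) z
      have h2 : rost (x - z) (s + t) ≤ rost (y - z) s + rost ((x - z) - (y - z)) t :=
        rost_le_add s t (x - z) (y - z) hs ht
      have h3 : (x - z) - (y - z) = x - y := by ring
      rw [h3] at h2
      linarith
    · -- B ≤ A
      refine le_ciInf fun z => ?_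
      obtain ⟨w, hw⟩ := rost_exists s t (x - z) hs ht
      have h1 : (⨅ y : ℝ, ((⨅ z : ℝ, (u₀ z + rost (y - z) s)) + rost (x - y) t))
          ≤ (⨅ z' : ℝ, (u₀ z' + rost ((z + w) - z') s)) + rost (x - (z + w)) t :=
        ciInf_le hbddB (z + w)
      have h2 : (⨅ z' : ℝ, (u₀ z' + rost ((z + w) - z') s)) ≤ u₀ z + rost ((z + w) - z) s :=
        ciInf_le (hbddin s hs (z + w)) z
      have e1 : (z + w) - z = w := by ring
      have e2 : x - (z + w) = (x - z) - w := by ring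
      rw [e1] at h2
      rw [e2] at h1
      have : u₀ z + rost w s + rost ((x - z) - w) t = u₀ z + rost (x - z) (s + t) := by
        rw [add_assoc, hw]
      linarith
  · intro x
    exact rost_add s t x hs ht
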